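/- Let (X,d) be a compact metric space of diameter at most 2. Then d_𝒪((x₁,t₁),(x₂,t₂)) := min(t₁,t₂)·d(x₁,x₂) + |t₁ − t₂| defines a metric on X × [1,∞), and this metric is proper (closed bounded sets are compact). -/
import Mathlib


/-- The cone distance on `X × [1,∞)`:
`d_𝒪((x₁,t₁),(x₂,t₂)) = min(t₁,t₂) · d(x₁,x₂) + |t₁ − t₂|`. -/
noncomputable def coneDist {X : Type*} [MetricSpace X]
    (p q : X × {t : ℝ // 1 ≤ t}) : ℝ :=
  min p.2.1 q.2.1 * dist p.1 q.1 + |p.2.1 - q.2.1|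

theorem coneDist_nonneg {X : Type*} [MetricSpace X]
    (p q : X × {t : ℝ // 1 ≤ t}) : 0 ≤ coneDist p q := by
  have h1 : (0:ℝ) ≤ min p.2.1 q.2.1 := le_trans zero_le_one (le_min p.2.2 q.2.2)
  exact add_nonneg (mul_nonneg h1 dist_nonneg) (abs_nonneg _)

/-- For a compact metric space `X` of diameter at most `2`, the cone distance defines a metric
on `X × [1,∞)`, and this metric is proper: closed bounded sets (e.g. closed balls) are
compact. -/
theorem stmt15 {X : Type*} [MetricSpace X] [CompactSpace X]
    (hdiam : Metric.diam (Set.univ : Set X) ≤ 2) :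
    (∀ p : X × {t : ℝ // 1 ≤ t}, coneDist p p = 0) ∧
    (∀ p q : X × {t : ℝ // 1 ≤ t}, coneDist p q = 0 → p = q) ∧
    (∀ p q : X × {t : ℝ // 1 ≤ t}, coneDist p q = coneDist q p) ∧
    (∀ p q r : X × {t : ℝ // 1 ≤ t}, coneDist p r ≤ coneDist p q + coneDist q r) ∧
    (∀ (p : X × {t : ℝ // 1 ≤ t}) (r : ℝ),
      IsCompact {q : X × {t : ℝ // 1 ≤ t} | coneDist p q ≤ r}) := by
  have hdist2 : ∀ a b : X, dist a b ≤ 2 := fun a b =>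
    le_trans (Metric.dist_le_diam_of_mem isCompact_univ.isBounded
      (Set.mem_univ a) (Set.mem_univ b)) hdiam
  refine ⟨?_, ?_, ?_, ?_, ?_⟩
  · intro p; simp [coneDist]
  · intro p q h
    have h1 : (0:ℝ) < min p.2.1 q.2.1 := lt_of_lt_of_le zero_lt_one (le_min p.2.2 q.2.2)
    have hm : 0 ≤ min p.2.1 q.2.1 * dist p.1 q.1 := mul_nonneg h1.le dist_nonneg
    have ha : 0 ≤ |p.2.1 - q.2.1| := abs_nonneg _
    unfold coneDist at h
    have h2 : min p.2.1 q.2.1 * dist p.1 q.1 = 0 ∧ |p.2.1 - q.2.1| = 0 := by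
      constructor <;> linarith
    obtain ⟨h2, h3⟩ := h2
    have hd : dist p.1 q.1 = 0 := by
      rcases mul_eq_zero.1 h2 with h | h
      · exact absurd h h1.ne'
      · exact h
    have ht : p.2.1 = q.2.1 := by
      have := abs_eq_zero.1 h3; linarith
    exact Prod.ext (dist_eq_zero.1 hd) (Subtype.ext ht)
  · intro p q; simp [coneDist, min_comm, dist_comm, abs_sub_comm]
  · intro p q r
    set t1 := p.2.1; set t2 := q.2.1; set t3 := r.2.1
    have h1 : (1:ℝ) ≤ t1 := p.2.2
    have h2 : (1:ℝ) ≤ t2 := q.2.2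
    have h3 : (1:ℝ) ≤ t3 := r.2.2
    have dtri : dist p.1 r.1 ≤ dist p.1 q.1 + dist q.1 r.1 := dist_triangle _ _ _
    simp only [coneDist]
    rcases le_or_gt (min t1 t3) t2 with hc | hc
    · have hm1 : min t1 t3 ≤ min t1 t2 := le_min (min_le_left _ _) hc
      have hm2 : min t1 t3 ≤ min t2 t3 := le_min hc (min_le_right _ _)
      have habs : |t1 - t3| ≤ |t1 - t2| + |t2 - t3| := abs_sub_le _ _ _
      have : min t1 t3 * dist p.1 r.1 ≤ min t1 t2 * dist p.1 q.1 + min t2 t3 * dist q.1 r.1 := by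
        calc min t1 t3 * dist p.1 r.1 ≤ min t1 t3 * (dist p.1 q.1 + dist q.1 r.1) := by
              apply mul_le_mul_of_nonneg_left dtri; positivity
          _ = min t1 t3 * dist p.1 q.1 + min t1 t3 * dist q.1 r.1 := by ring
          _ ≤ min t1 t2 * dist p.1 q.1 + min t2 t3 * dist q.1 r.1 := by
              gcongr
      linarith
    · -- t2 < min t1 t3, so t2 < t1 and t2 < t3
      have ht21 : t2 < t1 := lt_of_lt_of_le hc (min_le_left _ _)
      have ht23 : t2 < t3 := lt_of_lt_of_le hc (min_le_right _ _)
      have hm12 : min t1 t2 = t2 := min_eq_right ht21.le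
      have hm23 : min t2 t3 = t2 := min_eq_left ht23.le
      have habs1 : |t1 - t2| = t1 - t2 := abs_of_pos (by linarith)
      have habs2 : |t2 - t3| = t3 - t2 := by rw [abs_sub_comm]; exact abs_of_pos (by linarith)
      have habs3 : |t1 - t3| ≤ max t1 t3 - t2 - (min t1 t3 - t2) + 2 * (min t1 t3 - t2) - 2 * (min t1 t3 - t2) := by
        rw [abs_sub_le_iff]
        constructor <;> rcases le_total t1 t3 with h | h <;>
          simp [min_eq_left, min_eq_right, max_eq_left, max_eq_right, h] <;> linarith
      have key : (min t1 t3 - t2) * dist p.1 r.1 ≤ (min t1 t3 - t2) * 2 := by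
        apply mul_le_mul_of_nonneg_left (hdist2 _ _); linarith
      have h13 : |t1 - t3| + 2 * (min t1 t3 - t2) ≤ (t1 - t2) + (t3 - t2) := by
        rcases le_total t1 t3 with h | h <;>
          [rw [abs_of_nonpos (by linarith), min_eq_left h];
           rw [abs_of_nonneg (by linarith), min_eq_right h]] <;> linarith
      have hstep : min t1 t3 * dist p.1 r.1 ≤ t2 * (dist p.1 q.1 + dist q.1 r.1) + 2 * (min t1 t3 - t2) := by
        have : min t1 t3 * dist p.1 r.1 = t2 * dist p.1 r.1 + (min t1 t3 - t2) * dist p.1 r.1 := by ring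
        rw [this]
        have : t2 * dist p.1 r.1 ≤ t2 * (dist p.1 q.1 + dist q.1 r.1) :=
          mul_le_mul_of_nonneg_left dtri (by linarith)
        linarith
      rw [hm12, hm23, habs1, habs2]
      nlinarith [dist_nonneg (x := p.1) (y := q.1), dist_nonneg (x := q.1) (y := r.1)]
  · intro p r
    set S := {q : X × {t : ℝ // 1 ≤ t} | coneDist p q ≤ r}
    have hcont : Continuous fun q : X × {t : ℝ // 1 ≤ t} => coneDist p q := by
      unfold coneDist
      fun_prop
    have hclosed : IsClosed S := isClosed_le hcont continuous_const
    -- S ⊆ univ ×ˢ T where T is compact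
    set T : Set {t : ℝ // 1 ≤ t} := Subtype.val ⁻¹' Set.Icc 1 (p.2.1 + r)
    have hTcomp : IsCompact T := by
      rw [(Topology.IsClosedEmbedding.subtypeVal (isClosed_Ici (a := (1:ℝ)))).isCompact_iff]
      apply (isCompact_Icc (a := (1:ℝ)) (b := p.2.1 + r)).of_isClosed_subset
      · exact ((Topology.IsClosedEmbedding.subtypeVal
          (isClosed_Ici (a := (1:ℝ)))).isClosedMap _
          (isClosed_Icc.preimage continuous_subtype_val))
      · exact Set.image_preimage_subset _ _
    have hsub : S ⊆ Set.univ ×ˢ T := by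
      rintro ⟨x, t⟩ hq
      refine ⟨Set.mem_univ _, ?_⟩
      have h0 : 0 ≤ min p.2.1 t.1 * dist p.1 x :=
        mul_nonneg (le_trans zero_le_one (le_min p.2.2 t.2)) dist_nonneg
      have habs : |p.2.1 - t.1| ≤ r := by
        have := hq; simp only [coneDist, Set.mem_setOf_eq, S] at this; linarith
      have := abs_le.1 habs
      exact ⟨t.2, by linarith [this.1]⟩
    exact ((isCompact_univ.prod hTcomp).of_isClosed_subset hclosed hsub)
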